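/- Let (F,ε) = (F_0,ε_0) × ... × (F_n,ε_n) be a face of the blow-up Δ̃ = cΔ_0 × ... × cΔ_{n−1} × Δ_n of a regular filtered simplex, with F_0 = ... = F_{m−1} = ∅ (so ε_0 = ... = ε_{m−1} = 1) for some m ∈ {0,...,n−1}. Then for every ℓ ∈ {1,...,n}, the perverse degree ||1_{(F,ε)}||_ℓ does not depend on the face F_m: replacing F_m by any other face F'_m of Δ_m (keeping ε_m and all other factors fixed) yields a cochain with the same ℓ-perverse degrees for all ℓ. -/
import Mathlib


noncomputable section
open Finset

variable {ι : Type*} [LinearOrder ι]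

/-- The `ℓ`-perverse degree of the basis cochain `1_{(F,ε)}` on the blow-up
`Δ̃ = cΔ_0 × ... × cΔ_{n-1} × Δ_n` of a regular filtered simplex `Δ = Δ_0 * ... * Δ_n`:
it is `-∞` if `ε_{n-ℓ} = 1` and `|(F,ε)|_{> n-ℓ} = Σ_{j > n-ℓ} dim (F_j, ε_j)` otherwise,
where `dim (F_j, ε_j) = card F_j - 1 + ε_j`. -/
def pdeg (n : ℕ) (F : ℕ → Finset ι) (ε : ℕ → Bool) (ℓ : ℕ) : WithBot ℤ :=
  if ε (n - ℓ) then ⊥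
  else ((∑ j ∈ (Finset.range (n + 1)).filter (fun j => n - ℓ < j),
      (((F j).card : ℤ) + (if ε j then 1 else 0) - 1) : ℤ) : WithBot ℤ)

/-- A face `(F,ε)` of the blow-up of the regular filtered simplex `Δ = Δ_0 * ... * Δ_n`
(`Δ_n ≠ ∅`): each `F_i` is a face of `Δ_i` or empty with `ε_i = 1`, and `ε_n = 0` with
`F_n ≠ ∅`. -/
def IsBlowupFace (n : ℕ) (Δ : ℕ → Finset ι) (F : ℕ → Finset ι) (ε : ℕ → Bool) : Prop :=
  (∀ i ≤ n, F i ⊆ Δ i) ∧ ε n = false ∧ (F n).Nonempty ∧ ∀ i < n, F i = ∅ → ε i = true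

/-- Let `(F,ε)` be a face of the blow-up of a regular filtered simplex with
`F_0 = ... = F_{m-1} = ∅` for some `m ∈ {0,...,n-1}`.  Then for every `ℓ ∈ {1,...,n}` the
perverse degree `‖1_{(F,ε)}‖_ℓ` does not depend on the face `F_m`: replacing `F_m` by any other
face `F'_m` of `Δ_m` (keeping `ε_m` and all the other factors fixed) yields a cochain with the
same `ℓ`-perverse degrees for all `ℓ`. -/
theorem pdeg_not_depend_on_first_factor (n : ℕ) (Δ : ℕ → Finset ι)
    (F F' : ℕ → Finset ι) (ε : ℕ → Bool)
    (hface : IsBlowupFace n Δ F ε) (hface' : IsBlowupFace n Δ F' ε)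
    (m : ℕ) (hm : m < n) (hzero : ∀ i < m, F i = ∅)
    (hagree : ∀ j, j ≠ m → F' j = F j) :
    ∀ ℓ, 1 ≤ ℓ → ℓ ≤ n → pdeg n F ε ℓ = pdeg n F' ε ℓ := by
  intro ℓ h1 hℓ
  unfold pdeg
  by_cases h : ε (n - ℓ)
  · simp [h]
  · have hmle : m ≤ n - ℓ := by
      by_contra hc
      push_neg at hc
      have : F (n - ℓ) = ∅ := hzero _ hc
      have := hface.2.2.2 (n - ℓ) (lt_of_lt_of_le hc hm.le) this
      simp [this] at h
    simp only [h, if_false]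
    congr 2
    apply Finset.sum_congr rfl
    intro j hj
    simp only [Finset.mem_filter, Finset.mem_range] at hj
    rw [hagree j (by omega)]

end
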